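/- In the Grigorchuk group, the map σ defined on generators by σ(a) = aca, σ(b) = d, σ(c) = b, σ(d) = c extends to a group homomorphism σ: G → G whose image lies in the first-level stabilizer H, and it satisfies ψ(σ(g)) = (τ(g), g) for all g ∈ G, where τ: G → G is the homomorphism with τ(a) = d, τ(b) = 1, τ(c) = a, τ(d) = a. -/

import Mathlib

/-- The generator `a` of the Grigorchuk group, acting on finite binary sequences. -/
def grigA : List Bool → List Bool
  | [] => []
  | x :: σ => (!x) :: σ

mutual
  /-- The generator `b` of the Grigorchuk group. -/
  def grigB : List Bool → List Bool
    | [] => []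
    | false :: σ => false :: grigA σ
    | true :: σ => true :: grigC σ
  /-- The generator `c` of the Grigorchuk group. -/
  def grigC : List Bool → List Bool
    | [] => []
    | false :: σ => false :: grigA σ
    | true :: σ => true :: grigD σ
  /-- The generator `d` of the Grigorchuk group. -/
  def grigD : List Bool → List Bool
    | [] => []
    | false :: σ => false :: σ
    | true :: σ => true :: grigB σ
end

theorem grigA_involutive : Function.Involutive grigA := by
  intro l
  rcases l with _ | ⟨x, σ⟩
  · rfl
  · cases x <;> rfl

theorem grigBCD_involutive :
    ∀ l : List Bool, grigB (grigB l) = l ∧ grigC (grigC l) = l ∧ grigD (grigD l) = l := by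
  intro l
  induction l with
  | nil => exact ⟨rfl, rfl, rfl⟩
  | cons x σ ih =>
      cases x <;>
        simp [grigB, grigC, grigD, grigA_involutive σ, ih.1, ih.2.1, ih.2.2]

theorem grigB_involutive : Function.Involutive grigB := fun l => (grigBCD_involutive l).1
theorem grigC_involutive : Function.Involutive grigC := fun l => (grigBCD_involutive l).2.1
theorem grigD_involutive : Function.Involutive grigD := fun l => (grigBCD_involutive l).2.2

/-- The generator `a` as a permutation of binary sequences. -/
def aP : Equiv.Perm (List Bool) := grigA_involutive.toPerm
/-- The generator `b` as a permutation of binary sequences. -/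
def bP : Equiv.Perm (List Bool) := grigB_involutive.toPerm
/-- The generator `c` as a permutation of binary sequences. -/
def cP : Equiv.Perm (List Bool) := grigC_involutive.toPerm
/-- The generator `d` as a permutation of binary sequences. -/
def dP : Equiv.Perm (List Bool) := grigD_involutive.toPerm

/-- The Grigorchuk group, as the group of permutations of finite binary sequences
generated by `a`, `b`, `c`, `d`. -/
def Grig : Subgroup (Equiv.Perm (List Bool)) := Subgroup.closure {aP, bP, cP, dP}

/-- `a` as an element of the Grigorchuk group. -/
def ga : Grig := ⟨aP, Subgroup.subset_closure (by simp)⟩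
/-- `b` as an element of the Grigorchuk group. -/
def gb : Grig := ⟨bP, Subgroup.subset_closure (by simp)⟩
/-- `c` as an element of the Grigorchuk group. -/
def gc : Grig := ⟨cP, Subgroup.subset_closure (by simp)⟩
/-- `d` as an element of the Grigorchuk group. -/
def gd : Grig := ⟨dP, Subgroup.subset_closure (by simp)⟩

/-- A permutation of binary sequences preserves the first letter. -/
def FixesFirst (g : Equiv.Perm (List Bool)) : Prop :=
  ∀ (x : Bool) (σ : List Bool), ∃ σ' : List Bool, g (x :: σ) = x :: σ'

/-- The defining property of the subtree-decomposition map `ψ : H → G × G`: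
`h(0σ) = 0·h₀(σ)` and `h(1σ) = 1·h₁(σ)` where `ψ(h) = (h₀, h₁)`. -/
def PsiProp (H : Subgroup Grig) (ψ : H →* Grig × Grig) : Prop :=
  ∀ (h : H) (σ : List Bool),
    ((h : Grig) : Equiv.Perm (List Bool)) (false :: σ) =
        false :: (((ψ h).1 : Grig) : Equiv.Perm (List Bool)) σ ∧
    ((h : Grig) : Equiv.Perm (List Bool)) (true :: σ) =
        true :: (((ψ h).2 : Grig) : Equiv.Perm (List Bool)) σ

open Equiv (Perm)

/-! ### Basic facts about the generators -/

abbrev Pm := Equiv.Perm (List Bool)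

lemma aP_apply (l : List Bool) : aP l = grigA l := rfl
lemma bP_apply (l : List Bool) : bP l = grigB l := rfl
lemma cP_apply (l : List Bool) : cP l = grigC l := rfl
lemma dP_apply (l : List Bool) : dP l = grigD l := rfl

/-! ### The stabilizer of the first letter -/

lemma ff_one : FixesFirst 1 := fun x σ => ⟨σ, rfl⟩

lemma ff_mul {f g : Pm} (hf : FixesFirst f) (hg : FixesFirst g) : FixesFirst (f * g) := by
  intro x σ
  obtain ⟨σ1, h1⟩ := hg x σ
  obtain ⟨σ2, h2⟩ := hf x σ1
  exact ⟨σ2, by rw [Equiv.Perm.mul_apply, h1, h2]⟩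

lemma ff_nil {g : Pm} (hg : FixesFirst g) : g [] = [] := by
  cases h : g⁻¹ ([] : List Bool) with
  | nil =>
      have : g (g⁻¹ ([] : List Bool)) = [] := g.apply_symm_apply _
      rw [h] at this
      exact this
  | cons y ρ =>
      obtain ⟨ρ', hρ⟩ := hg y ρ
      have : g (g⁻¹ ([] : List Bool)) = [] := g.apply_symm_apply _
      rw [h, hρ] at this
      exact absurd this (by simp)

lemma ff_inv {g : Pm} (hg : FixesFirst g) : FixesFirst g⁻¹ := by
  intro x σ
  cases h : g⁻¹ (x :: σ) with
  | nil =>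
      have : g (g⁻¹ (x :: σ)) = x :: σ := g.apply_symm_apply _
      rw [h, ff_nil hg] at this
      exact absurd this (by simp)
  | cons y ρ =>
      obtain ⟨ρ', hρ⟩ := hg y ρ
      have : g (g⁻¹ (x :: σ)) = x :: σ := g.apply_symm_apply _
      rw [h, hρ] at this
      obtain ⟨h1, h2⟩ := List.cons_eq_cons.mp this
      exact ⟨ρ, by rw [h1]⟩

/-- The subgroup of all permutations fixing the first letter. -/
def SFix : Subgroup Pm where
  carrier := {g | FixesFirst g}
  one_mem' := ff_one
  mul_mem' := fun h1 h2 => ff_mul h1 h2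
  inv_mem' := fun h => ff_inv h

/-- The first-level stabilizer inside the Grigorchuk group. -/
def Hst : Subgroup Grig := SFix.comap Grig.subtype

lemma mem_Hst {g : Grig} : g ∈ Hst ↔ FixesFirst (g : Pm) := Iff.rfl

/-! ### Restriction to the two subtrees -/

lemma sfix_cons_tail (s : SFix) (x : Bool) (σ : List Bool) :
    (s : Pm) (x :: σ) = x :: ((s : Pm) (x :: σ)).tail := by
  obtain ⟨σ', h⟩ := s.2 x σ
  rw [h]
  rfl

/-- Restriction of a first-letter-fixing permutation to the subtree at `x`. -/
def resE (s : SFix) (x : Bool) : Pm where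
  toFun := fun σ => ((s : Pm) (x :: σ)).tail
  invFun := fun σ => ((s⁻¹ : SFix) : Pm) (x :: σ) |>.tail
  left_inv := by
    intro σ
    show (((s⁻¹ : SFix) : Pm) (x :: ((s : Pm) (x :: σ)).tail)).tail = σ
    rw [← sfix_cons_tail s x σ]
    show ((s : Pm)⁻¹ ((s : Pm) (x :: σ))).tail = σ
    rw [show ∀ y, (s : Pm)⁻¹ ((s : Pm) y) = y from fun y => Equiv.symm_apply_apply _ y]
    rfl
  right_inv := by
    intro σ
    show ((s : Pm) (x :: (((s⁻¹ : SFix) : Pm) (x :: σ)).tail)).tail = σ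
    rw [← sfix_cons_tail s⁻¹ x σ]
    show ((s : Pm) ((s : Pm)⁻¹ (x :: σ))).tail = σ
    rw [show ∀ y, (s : Pm) ((s : Pm)⁻¹ y) = y from fun y => Equiv.apply_symm_apply _ y]
    rfl

lemma resE_apply (s : SFix) (x : Bool) (σ : List Bool) :
    resE s x σ = ((s : Pm) (x :: σ)).tail := rfl

lemma sfix_cons (s : SFix) (x : Bool) (σ : List Bool) :
    (s : Pm) (x :: σ) = x :: resE s x σ := sfix_cons_tail s x σ

lemma resE_mul (s t : SFix) (x : Bool) : resE (s * t) x = resE s x * resE t x := by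
  apply Equiv.ext
  intro σ
  rw [Equiv.Perm.mul_apply, resE_apply, resE_apply, resE_apply]
  show ((s : Pm) ((t : Pm) (x :: σ))).tail = ((s : Pm) (x :: ((t : Pm) (x :: σ)).tail)).tail
  rw [← sfix_cons_tail t x σ]

/-- The two restrictions, as a homomorphism `SFix →* Pm × Pm`. -/
def EH : SFix →* Pm × Pm :=
  MonoidHom.mk' (fun s => (resE s false, resE s true))
    (fun s t => Prod.ext (resE_mul s t false) (resE_mul s t true))

/-! ### The subgroup K = ⟨b, c, d, aba, aca, ada⟩ -/

def Kgens : Set Pm := {bP, cP, dP, aP*bP*aP, aP*cP*aP, aP*dP*aP}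

def K : Subgroup Pm := Subgroup.closure Kgens

lemma aP_mul_aP : aP * aP = 1 := Equiv.ext fun l => grigA_involutive l
lemma bP_mul_bP : bP * bP = 1 := Equiv.ext fun l => grigB_involutive l
lemma dP_mul_dP : dP * dP = 1 := Equiv.ext fun l => grigD_involutive l

lemma K_le_Grig : K ≤ Grig := by
  rw [K, Subgroup.closure_le]
  intro g hg
  simp only [Kgens, Set.mem_insert_iff, Set.mem_singleton_iff] at hg
  rcases hg with rfl | rfl | rfl | rfl | rfl | rfl
  · exact gb.2
  · exact gc.2
  · exact gd.2
  · exact mul_mem (mul_mem ga.2 gb.2) ga.2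
  · exact mul_mem (mul_mem ga.2 gc.2) ga.2
  · exact mul_mem (mul_mem ga.2 gd.2) ga.2

lemma mem_Kgens (g : Pm) (h : g ∈ Kgens) : g ∈ K := Subgroup.subset_closure h

lemma conj_mem_K : ∀ g ∈ K, aP * g * aP ∈ K := by
  intro g hg
  induction hg using Subgroup.closure_induction with
  | mem x hx =>
      simp only [Kgens, Set.mem_insert_iff, Set.mem_singleton_iff] at hx
      rcases hx with rfl | rfl | rfl | rfl | rfl | rfl
      · exact mem_Kgens _ (by simp [Kgens])
      · exact mem_Kgens _ (by simp [Kgens])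
      · exact mem_Kgens _ (by simp [Kgens])
      · rw [show aP * (aP*bP*aP) * aP = (aP*aP)*bP*(aP*aP) from by group, aP_mul_aP, one_mul,
          mul_one]
        exact mem_Kgens _ (by simp [Kgens])
      · rw [show aP * (aP*cP*aP) * aP = (aP*aP)*cP*(aP*aP) from by group, aP_mul_aP, one_mul,
          mul_one]
        exact mem_Kgens _ (by simp [Kgens])
      · rw [show aP * (aP*dP*aP) * aP = (aP*aP)*dP*(aP*aP) from by group, aP_mul_aP, one_mul,
          mul_one]
        exact mem_Kgens _ (by simp [Kgens])
  | one =>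
      rw [mul_one, aP_mul_aP]
      exact one_mem K
  | mul x y hx hy ihx ihy =>
      have h2 : (aP*x*aP)*(aP*y*aP) = aP*(x*y)*aP := by
        rw [show (aP*x*aP)*(aP*y*aP) = aP*(x*(aP*aP)*y)*aP from by group, aP_mul_aP, mul_one]
      exact h2 ▸ mul_mem ihx ihy
  | inv x hx ih =>
      have ainv : aP⁻¹ = aP := inv_eq_of_mul_eq_one_right aP_mul_aP
      have h2 : (aP*x*aP)⁻¹ = aP*x⁻¹*aP := by
        rw [mul_inv_rev, mul_inv_rev, ainv, mul_assoc]
      exact h2 ▸ inv_mem ih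

lemma grig_K_or : ∀ g ∈ Grig, g ∈ K ∨ aP * g ∈ K := by
  intro g hg
  have hg' : g ∈ Subgroup.closure {aP, bP, cP, dP} := hg
  clear hg
  induction hg' using Subgroup.closure_induction with
  | mem x hx =>
      simp only [Set.mem_insert_iff, Set.mem_singleton_iff] at hx
      rcases hx with rfl | rfl | rfl | rfl
      · right; rw [aP_mul_aP]; exact one_mem K
      · left; exact mem_Kgens _ (by simp [Kgens])
      · left; exact mem_Kgens _ (by simp [Kgens])
      · left; exact mem_Kgens _ (by simp [Kgens])
  | one => left; exact one_mem K
  | mul x y hx hy ihx ihy =>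
      rcases ihx with h1 | h1 <;> rcases ihy with h2 | h2
      · left; exact mul_mem h1 h2
      · right
        rw [show aP*(x*y) = (aP*x*aP)*(aP*y) from by
          rw [show (aP*x*aP)*(aP*y) = aP*(x*(aP*aP)*y) from by group, aP_mul_aP, mul_one]]
        exact mul_mem (conj_mem_K x h1) h2
      · right
        rw [← mul_assoc]
        exact mul_mem h1 h2
      · left
        rw [show x*y = (aP*(aP*x)*aP)*(aP*y) from by
          rw [show (aP*(aP*x)*aP)*(aP*y) = (aP*aP)*(x*((aP*aP)*y)) from by group, aP_mul_aP,
            one_mul, one_mul]]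
        exact mul_mem (conj_mem_K _ h1) h2
  | inv x hx ih =>
      rcases ih with h1 | h1
      · left; exact inv_mem h1
      · right
        rw [show aP*x⁻¹ = aP*(aP*x)⁻¹*aP from by group]
        exact conj_mem_K _ (inv_mem h1)

lemma ff_bP : FixesFirst bP := by
  intro x σ; cases x
  · exact ⟨grigA σ, by simp [bP_apply, grigB]⟩
  · exact ⟨grigC σ, by simp [bP_apply, grigB]⟩

lemma ff_cP : FixesFirst cP := by
  intro x σ; cases x
  · exact ⟨grigA σ, by simp [cP_apply, grigC]⟩
  · exact ⟨grigD σ, by simp [cP_apply, grigC]⟩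

lemma ff_dP : FixesFirst dP := by
  intro x σ; cases x
  · exact ⟨σ, by simp [dP_apply, grigD]⟩
  · exact ⟨grigB σ, by simp [dP_apply, grigD]⟩

lemma ff_aba : FixesFirst (aP*bP*aP) := by
  intro x σ; cases x
  · exact ⟨grigC σ, by simp [Equiv.Perm.mul_apply, aP_apply, bP_apply, grigA, grigB]⟩
  · exact ⟨grigA σ, by simp [Equiv.Perm.mul_apply, aP_apply, bP_apply, grigA, grigB]⟩

lemma ff_aca : FixesFirst (aP*cP*aP) := by
  intro x σ; cases x
  · exact ⟨grigD σ, by simp [Equiv.Perm.mul_apply, aP_apply, cP_apply, grigA, grigC]⟩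
  · exact ⟨grigA σ, by simp [Equiv.Perm.mul_apply, aP_apply, cP_apply, grigA, grigC]⟩

lemma ff_ada : FixesFirst (aP*dP*aP) := by
  intro x σ; cases x
  · exact ⟨grigB σ, by simp [Equiv.Perm.mul_apply, aP_apply, dP_apply, grigA, grigD]⟩
  · exact ⟨σ, by simp [Equiv.Perm.mul_apply, aP_apply, dP_apply, grigA, grigD]⟩

lemma ff_K : ∀ g ∈ K, FixesFirst g := by
  intro g hg
  induction hg using Subgroup.closure_induction with
  | mem x hx =>
      simp only [Kgens, Set.mem_insert_iff, Set.mem_singleton_iff] at hx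
      rcases hx with rfl | rfl | rfl | rfl | rfl | rfl
      exacts [ff_bP, ff_cP, ff_dP, ff_aba, ff_aca, ff_ada]
  | one => exact ff_one
  | mul x y hx hy ihx ihy => exact ff_mul ihx ihy
  | inv x hx ih => exact ff_inv ih

lemma not_ff_aP : ¬ FixesFirst aP := by
  intro h
  obtain ⟨σ', hσ⟩ := h false []
  simp [aP_apply, grigA] at hσ

lemma mem_K_of_ff : ∀ g ∈ Grig, FixesFirst g → g ∈ K := by
  intro g hg hf
  rcases grig_K_or g hg with h | h
  · exact h
  · exfalso
    apply not_ff_aP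
    have : aP = (aP * g) * g⁻¹ := by group
    rw [this]
    exact ff_mul (ff_K _ h) (ff_inv hf)

lemma EH_fst (s : SFix) : (EH s).1 = resE s false := rfl
lemma EH_snd (s : SFix) : (EH s).2 = resE s true := rfl

lemma resE_mem_Grig : ∀ g ∈ K, ∀ hh : g ∈ SFix,
    (EH ⟨g, hh⟩).1 ∈ Grig ∧ (EH ⟨g, hh⟩).2 ∈ Grig := by
  intro g hg
  induction hg using Subgroup.closure_induction with
  | mem x hx =>
      intro hh
      simp only [Kgens, Set.mem_insert_iff, Set.mem_singleton_iff] at hx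
      rcases hx with rfl | rfl | rfl | rfl | rfl | rfl
      · constructor
        · have : (EH ⟨bP, hh⟩).1 = aP :=
            Equiv.ext fun σ => by simp [EH_fst, resE_apply, bP_apply, aP_apply, grigB]
          rw [this]; exact ga.2
        · have : (EH ⟨bP, hh⟩).2 = cP :=
            Equiv.ext fun σ => by simp [EH_snd, resE_apply, bP_apply, cP_apply, grigB]
          rw [this]; exact gc.2
      · constructor
        · have : (EH ⟨cP, hh⟩).1 = aP :=
            Equiv.ext fun σ => by simp [EH_fst, resE_apply, cP_apply, aP_apply, grigC]
          rw [this]; exact ga.2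
        · have : (EH ⟨cP, hh⟩).2 = dP :=
            Equiv.ext fun σ => by simp [EH_snd, resE_apply, cP_apply, dP_apply, grigC]
          rw [this]; exact gd.2
      · constructor
        · have : (EH ⟨dP, hh⟩).1 = 1 :=
            Equiv.ext fun σ => by simp [EH_fst, resE_apply, dP_apply, grigD]
          rw [this]; exact one_mem Grig
        · have : (EH ⟨dP, hh⟩).2 = bP :=
            Equiv.ext fun σ => by simp [EH_snd, resE_apply, dP_apply, bP_apply, grigD]
          rw [this]; exact gb.2
      · constructor
        · have : (EH ⟨aP*bP*aP, hh⟩).1 = cP :=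
            Equiv.ext fun σ => by
              simp [EH_fst, resE_apply, Equiv.Perm.mul_apply, aP_apply, bP_apply, cP_apply,
                grigA, grigB]
          rw [this]; exact gc.2
        · have : (EH ⟨aP*bP*aP, hh⟩).2 = aP :=
            Equiv.ext fun σ => by
              simp [EH_snd, resE_apply, Equiv.Perm.mul_apply, aP_apply, bP_apply, grigA, grigB]
          rw [this]; exact ga.2
      · constructor
        · have : (EH ⟨aP*cP*aP, hh⟩).1 = dP :=
            Equiv.ext fun σ => by
              simp [EH_fst, resE_apply, Equiv.Perm.mul_apply, aP_apply, cP_apply, dP_apply,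
                grigA, grigC]
          rw [this]; exact gd.2
        · have : (EH ⟨aP*cP*aP, hh⟩).2 = aP :=
            Equiv.ext fun σ => by
              simp [EH_snd, resE_apply, Equiv.Perm.mul_apply, aP_apply, cP_apply, grigA, grigC]
          rw [this]; exact ga.2
      · constructor
        · have : (EH ⟨aP*dP*aP, hh⟩).1 = bP :=
            Equiv.ext fun σ => by
              simp [EH_fst, resE_apply, Equiv.Perm.mul_apply, aP_apply, dP_apply, bP_apply,
                grigA, grigD]
          rw [this]; exact gb.2
        · have : (EH ⟨aP*dP*aP, hh⟩).2 = 1 :=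
            Equiv.ext fun σ => by
              simp [EH_snd, resE_apply, Equiv.Perm.mul_apply, aP_apply, dP_apply, grigA, grigD]
          rw [this]; exact one_mem Grig
  | one =>
      intro hh
      have : (⟨1, hh⟩ : SFix) = 1 := rfl
      rw [this, map_one]
      exact ⟨one_mem Grig, one_mem Grig⟩
  | mul x y hx hy ihx ihy =>
      intro hh
      have ffx : x ∈ SFix := ff_K x hx
      have ffy : y ∈ SFix := ff_K y hy
      have : (⟨x*y, hh⟩ : SFix) = ⟨x, ffx⟩ * ⟨y, ffy⟩ := rfl
      rw [this, map_mul]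
      exact ⟨mul_mem (ihx ffx).1 (ihy ffy).1, mul_mem (ihx ffx).2 (ihy ffy).2⟩
  | inv x hx ih =>
      intro hh
      have ffx : x ∈ SFix := ff_K x hx
      have : (⟨x⁻¹, hh⟩ : SFix) = (⟨x, ffx⟩ : SFix)⁻¹ := rfl
      rw [this, map_inv]
      exact ⟨inv_mem (ih ffx).1, inv_mem (ih ffx).2⟩

/-! ### The homomorphism ψ -/

def sfOf (h : Hst) : SFix := ⟨((h : Grig) : Pm), h.2⟩

lemma sfOf_mem_K (h : Hst) : ((h : Grig) : Pm) ∈ K :=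
  mem_K_of_ff _ (h : Grig).2 h.2

def ψG : Hst →* Grig × Grig :=
  MonoidHom.mk' (fun h =>
    (⟨(EH (sfOf h)).1, (resE_mem_Grig _ (sfOf_mem_K h) _).1⟩,
     ⟨(EH (sfOf h)).2, (resE_mem_Grig _ (sfOf_mem_K h) _).2⟩))
    (by
      intro h1 h2
      have key : sfOf (h1 * h2) = sfOf h1 * sfOf h2 := rfl
      refine Prod.ext (Subtype.ext ?_) (Subtype.ext ?_)
      · show (EH (sfOf (h1*h2))).1 = (EH (sfOf h1)).1 * (EH (sfOf h2)).1
        rw [key, map_mul]; rfl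
      · show (EH (sfOf (h1*h2))).2 = (EH (sfOf h1)).2 * (EH (sfOf h2)).2
        rw [key, map_mul]; rfl)

lemma psiProp_ψG : PsiProp Hst ψG := by
  intro h σ
  constructor
  · exact sfix_cons (sfOf h) false σ
  · exact sfix_cons (sfOf h) true σ

/-! ### A certificate lemma: a finite set closed under left multiplication by generators
contains the generated subgroup. -/

lemma closure_subset_finset {G : Type*} [Group G] (S : Set G) (F : Finset G)
    (h1 : (1:G) ∈ F) (hS : ∀ g ∈ S, ∀ x ∈ F, g * x ∈ F) : ∀ h ∈ Subgroup.closure S, h ∈ F := by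
  classical
  let M : Subgroup G :=
    { carrier := {h | ∀ x ∈ F, h * x ∈ F}
      one_mem' := by intro x hx; rwa [one_mul]
      mul_mem' := by
        intro a b ha hb x hx
        rw [mul_assoc]; exact ha _ (hb _ hx)
      inv_mem' := by
        intro a ha x hx
        have himg : F.image (fun y => a * y) ⊆ F := by
          intro z hz
          rw [Finset.mem_image] at hz
          obtain ⟨y, hy, rfl⟩ := hz
          exact ha y hy
        have hcard : (F.image (fun y => a * y)).card = F.card :=
          Finset.card_image_of_injective F (mul_right_injective a)
        have heq : F.image (fun y => a * y) = F :=
          Finset.eq_of_subset_of_card_le himg (le_of_eq hcard.symm)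
        have hx' : x ∈ F.image (fun y => a * y) := heq.symm ▸ hx
        rw [Finset.mem_image] at hx'
        obtain ⟨y, hy, hxy⟩ := hx'
        have : a⁻¹ * x = y := by rw [← hxy, ← mul_assoc, inv_mul_cancel, one_mul]
        rwa [this] }
  intro h hh
  have hM : h ∈ M := (Subgroup.closure_le M).mpr (fun g hg => hS g hg) hh
  have := hM 1 h1
  rwa [mul_one] at this

/-! ### Dihedral relations among a and d -/

lemma ga2 : ga * ga = 1 := Subtype.ext aP_mul_aP
lemma gd2 : gd * gd = 1 := Subtype.ext dP_mul_dP

lemma adad_apply (x : Bool) (σ : List Bool) : (aP*dP*aP*dP) (x :: σ) = x :: grigB σ := by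
  cases x <;> simp [Equiv.Perm.mul_apply, aP_apply, dP_apply, grigA, grigD]

lemma dada_apply (x : Bool) (σ : List Bool) : (dP*aP*dP*aP) (x :: σ) = x :: grigB σ := by
  cases x <;> simp [Equiv.Perm.mul_apply, aP_apply, dP_apply, grigA, grigD]

lemma adad_eq_dada : aP*dP*aP*dP = dP*aP*dP*aP := by
  apply Equiv.ext
  intro l
  cases l with
  | nil => simp [Equiv.Perm.mul_apply, aP_apply, dP_apply, grigA, grigD]
  | cons x σ => rw [adad_apply, dada_apply]

lemma ad4 : (aP*dP*aP*dP)*(aP*dP*aP*dP) = 1 := by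
  apply Equiv.ext
  intro l
  cases l with
  | nil => simp [Equiv.Perm.mul_apply, aP_apply, dP_apply, grigA, grigD]
  | cons x σ =>
      rw [Equiv.Perm.mul_apply, adad_apply, adad_apply, grigB_involutive σ]
      rfl

lemma gadad : ga*gd*ga*gd = gd*ga*gd*ga := Subtype.ext adad_eq_dada
lemma gad4 : (ga*gd*ga*gd)*(ga*gd*ga*gd) = 1 := Subtype.ext ad4

/-- The dihedral subgroup ⟨a, d⟩. -/
def DS : Subgroup Grig := Subgroup.closure {ga, gd}

open Classical in
noncomputable def EF : Finset Grig :=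
  {1, ga, gd, ga*gd, gd*ga, ga*gd*ga, gd*ga*gd, ga*gd*ga*gd}

lemma DS_sub_EF : ∀ h ∈ DS, h ∈ EF := by
  classical
  apply closure_subset_finset
  · simp [EF]
  · intro g hg x hx
    simp only [EF, Finset.mem_insert, Finset.mem_singleton] at hx ⊢
    rcases hg with rfl | rfl
    · rcases hx with rfl | rfl | rfl | rfl | rfl | rfl | rfl | rfl
      · simp
      · rw [ga2]; simp
      · simp
      · rw [show ga*(ga*gd) = (ga*ga)*gd from by group, ga2, one_mul]; simp
      · rw [show ga*(gd*ga) = ga*gd*ga from by group]; simp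
      · rw [show ga*(ga*gd*ga) = (ga*ga)*(gd*ga) from by group, ga2, one_mul]; simp
      · rw [show ga*(gd*ga*gd) = ga*gd*ga*gd from by group]; simp
      · rw [show ga*(ga*gd*ga*gd) = (ga*ga)*(gd*ga*gd) from by group, ga2, one_mul]; simp
    · rcases hx with rfl | rfl | rfl | rfl | rfl | rfl | rfl | rfl
      · simp
      · simp [show gd*ga = gd*ga from rfl]
      · rw [gd2]; simp
      · rw [show gd*(ga*gd) = gd*ga*gd from by group]; simp
      · rw [show gd*(gd*ga) = (gd*gd)*ga from by group, gd2, one_mul]; simp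
      · rw [show gd*(ga*gd*ga) = gd*ga*gd*ga from by group, ← gadad]; simp
      · rw [show gd*(gd*ga*gd) = (gd*gd)*(ga*gd) from by group, gd2, one_mul]; simp
      · rw [show gd*(ga*gd*ga*gd) = gd*(ga*gd*ga*gd) from rfl, gadad,
          show gd*(gd*ga*gd*ga) = (gd*gd)*(ga*gd*ga) from by group, gd2, one_mul]
        simp

/-! ### Length preservation and the level-3 action -/

lemma grigA_len (l : List Bool) : (grigA l).length = l.length := by
  cases l <;> simp [grigA]

lemma grigBCD_len : ∀ l : List Bool,
    (grigB l).length = l.length ∧ (grigC l).length = l.length ∧ (grigD l).length = l.length := by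
  intro l
  induction l with
  | nil => exact ⟨rfl, rfl, rfl⟩
  | cons x σ ih =>
      cases x <;> simp [grigB, grigC, grigD, grigA_len, ih.1, ih.2.1, ih.2.2]

lemma grig_length : ∀ g ∈ Grig, ∀ l : List Bool, (g l).length = l.length := by
  intro g hg
  have hg' : g ∈ Subgroup.closure {aP, bP, cP, dP} := hg
  clear hg
  induction hg' using Subgroup.closure_induction with
  | mem x hx =>
      simp only [Set.mem_insert_iff, Set.mem_singleton_iff] at hx
      rcases hx with rfl | rfl | rfl | rfl
      · exact grigA_len
      · exact fun l => (grigBCD_len l).1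
      · exact fun l => (grigBCD_len l).2.1
      · exact fun l => (grigBCD_len l).2.2
  | one => exact fun l => rfl
  | mul x y hx hy ihx ihy =>
      intro l
      rw [Equiv.Perm.mul_apply, ihx, ihy]
  | inv x hx ih =>
      intro l
      have := ih (x⁻¹ l)
      rw [show x (x⁻¹ l) = l from x.apply_symm_apply l] at this
      exact this.symm

/-- Binary sequences of length 3. -/
abbrev L3 := {l : List Bool // l.length = 3}

instance : Fintype L3 where
  elems := ⟨(([⟨[false,false,false],rfl⟩, ⟨[false,false,true],rfl⟩, ⟨[false,true,false],rfl⟩,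
    ⟨[false,true,true],rfl⟩, ⟨[true,false,false],rfl⟩, ⟨[true,false,true],rfl⟩,
    ⟨[true,true,false],rfl⟩, ⟨[true,true,true],rfl⟩] : List L3) : Multiset L3), by decide⟩
  complete := by
    rintro ⟨l, h⟩
    rcases l with _ | ⟨a, _ | ⟨b, _ | ⟨c, _ | ⟨d, t⟩⟩⟩⟩
    · simp at h
    · simp at h
    · simp at h
    · cases a <;> cases b <;> cases c <;>
        simp [Finset.mem_mk, Multiset.mem_coe, List.mem_cons, Subtype.ext_iff]
    · simp at h

abbrev P3 := Equiv.Perm L3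

instance : DecidableEq P3 := fun f g =>
  decidable_of_iff (∀ x, f x = g x) ⟨fun h => Equiv.ext h, fun h x => by rw [h]⟩

/-- The level-3 action of the Grigorchuk group. -/
def lv3 (g : Grig) : P3 :=
  Equiv.Perm.subtypePerm (g : Pm) (fun l => by rw [grig_length _ g.2 l])

lemma lv3_mul (g h : Grig) : lv3 (g * h) = lv3 g * lv3 h := rfl

def Lh : Grig →* P3 := MonoidHom.mk' lv3 lv3_mul

lemma lv3_one : lv3 1 = 1 := map_one Lh
def wg0 : P3 × P3 := (lv3 ga, lv3 gd)
def wg1 : P3 × P3 := (lv3 gb, 1)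
def wg2 : P3 × P3 := (lv3 gc, lv3 ga)
def wg3 : P3 × P3 := (lv3 gd, lv3 ga)

def ws : List (P3 × P3) := [
  1,
  wg0,
  wg1,
  wg2,
  wg3,
  wg0 * (wg1),
  wg0 * (wg2),
  wg0 * (wg3),
  wg1 * (wg0),
  wg2 * (wg0),
  wg3 * (wg0),
  wg0 * (wg1 * (wg0)),
  wg0 * (wg2 * (wg0)),
  wg0 * (wg3 * (wg0)),
  wg1 * (wg0 * (wg1)),
  wg1 * (wg0 * (wg2)),
  wg1 * (wg0 * (wg3)),
  wg2 * (wg0 * (wg1)),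
  wg2 * (wg0 * (wg2)),
  wg2 * (wg0 * (wg3)),
  wg3 * (wg0 * (wg1)),
  wg3 * (wg0 * (wg2)),
  wg3 * (wg0 * (wg3)),
  wg0 * (wg1 * (wg0 * (wg1))),
  wg0 * (wg1 * (wg0 * (wg2))),
  wg0 * (wg1 * (wg0 * (wg3))),
  wg0 * (wg2 * (wg0 * (wg1))),
  wg0 * (wg2 * (wg0 * (wg2))),
  wg0 * (wg2 * (wg0 * (wg3))),
  wg0 * (wg3 * (wg0 * (wg1))),
  wg0 * (wg3 * (wg0 * (wg2))),
  wg0 * (wg3 * (wg0 * (wg3))),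
  wg1 * (wg0 * (wg1 * (wg0))),
  wg1 * (wg0 * (wg2 * (wg0))),
  wg1 * (wg0 * (wg3 * (wg0))),
  wg2 * (wg0 * (wg1 * (wg0))),
  wg2 * (wg0 * (wg3 * (wg0))),
  wg3 * (wg0 * (wg1 * (wg0))),
  wg3 * (wg0 * (wg2 * (wg0))),
  wg0 * (wg1 * (wg0 * (wg1 * (wg0)))),
  wg0 * (wg1 * (wg0 * (wg2 * (wg0)))),
  wg0 * (wg1 * (wg0 * (wg3 * (wg0)))),
  wg0 * (wg2 * (wg0 * (wg1 * (wg0)))),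
  wg0 * (wg2 * (wg0 * (wg3 * (wg0)))),
  wg0 * (wg3 * (wg0 * (wg1 * (wg0)))),
  wg0 * (wg3 * (wg0 * (wg2 * (wg0)))),
  wg1 * (wg0 * (wg1 * (wg0 * (wg1)))),
  wg1 * (wg0 * (wg1 * (wg0 * (wg2)))),
  wg1 * (wg0 * (wg1 * (wg0 * (wg3)))),
  wg1 * (wg0 * (wg2 * (wg0 * (wg1)))),
  wg1 * (wg0 * (wg2 * (wg0 * (wg3)))),
  wg1 * (wg0 * (wg3 * (wg0 * (wg1)))),
  wg1 * (wg0 * (wg3 * (wg0 * (wg2)))),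
  wg2 * (wg0 * (wg1 * (wg0 * (wg1)))),
  wg2 * (wg0 * (wg1 * (wg0 * (wg2)))),
  wg2 * (wg0 * (wg1 * (wg0 * (wg3)))),
  wg3 * (wg0 * (wg1 * (wg0 * (wg1)))),
  wg3 * (wg0 * (wg1 * (wg0 * (wg2)))),
  wg3 * (wg0 * (wg1 * (wg0 * (wg3)))),
  wg0 * (wg1 * (wg0 * (wg1 * (wg0 * (wg1))))),
  wg0 * (wg1 * (wg0 * (wg1 * (wg0 * (wg2))))),
  wg0 * (wg1 * (wg0 * (wg1 * (wg0 * (wg3))))),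
  wg0 * (wg1 * (wg0 * (wg2 * (wg0 * (wg1))))),
  wg0 * (wg1 * (wg0 * (wg2 * (wg0 * (wg3))))),
  wg0 * (wg1 * (wg0 * (wg3 * (wg0 * (wg1))))),
  wg0 * (wg1 * (wg0 * (wg3 * (wg0 * (wg2))))),
  wg0 * (wg2 * (wg0 * (wg1 * (wg0 * (wg1))))),
  wg0 * (wg2 * (wg0 * (wg1 * (wg0 * (wg2))))),
  wg0 * (wg2 * (wg0 * (wg1 * (wg0 * (wg3))))),
  wg0 * (wg3 * (wg0 * (wg1 * (wg0 * (wg1))))),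
  wg0 * (wg3 * (wg0 * (wg1 * (wg0 * (wg2))))),
  wg0 * (wg3 * (wg0 * (wg1 * (wg0 * (wg3))))),
  wg1 * (wg0 * (wg1 * (wg0 * (wg1 * (wg0))))),
  wg1 * (wg0 * (wg1 * (wg0 * (wg2 * (wg0))))),
  wg1 * (wg0 * (wg1 * (wg0 * (wg3 * (wg0))))),
  wg1 * (wg0 * (wg2 * (wg0 * (wg1 * (wg0))))),
  wg1 * (wg0 * (wg2 * (wg0 * (wg3 * (wg0))))),
  wg1 * (wg0 * (wg3 * (wg0 * (wg1 * (wg0))))),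
  wg1 * (wg0 * (wg3 * (wg0 * (wg2 * (wg0))))),
  wg2 * (wg0 * (wg1 * (wg0 * (wg1 * (wg0))))),
  wg2 * (wg0 * (wg1 * (wg0 * (wg2 * (wg0))))),
  wg3 * (wg0 * (wg1 * (wg0 * (wg1 * (wg0))))),
  wg3 * (wg0 * (wg1 * (wg0 * (wg3 * (wg0))))),
  wg0 * (wg1 * (wg0 * (wg1 * (wg0 * (wg1 * (wg0)))))),
  wg0 * (wg1 * (wg0 * (wg1 * (wg0 * (wg2 * (wg0)))))),
  wg0 * (wg1 * (wg0 * (wg1 * (wg0 * (wg3 * (wg0)))))),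
  wg0 * (wg1 * (wg0 * (wg2 * (wg0 * (wg1 * (wg0)))))),
  wg0 * (wg1 * (wg0 * (wg2 * (wg0 * (wg3 * (wg0)))))),
  wg0 * (wg1 * (wg0 * (wg3 * (wg0 * (wg1 * (wg0)))))),
  wg0 * (wg1 * (wg0 * (wg3 * (wg0 * (wg2 * (wg0)))))),
  wg0 * (wg2 * (wg0 * (wg1 * (wg0 * (wg1 * (wg0)))))),
  wg0 * (wg2 * (wg0 * (wg1 * (wg0 * (wg2 * (wg0)))))),
  wg0 * (wg3 * (wg0 * (wg1 * (wg0 * (wg1 * (wg0)))))),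
  wg0 * (wg3 * (wg0 * (wg1 * (wg0 * (wg3 * (wg0)))))),
  wg1 * (wg0 * (wg1 * (wg0 * (wg1 * (wg0 * (wg1)))))),
  wg1 * (wg0 * (wg1 * (wg0 * (wg1 * (wg0 * (wg2)))))),
  wg1 * (wg0 * (wg1 * (wg0 * (wg1 * (wg0 * (wg3)))))),
  wg1 * (wg0 * (wg1 * (wg0 * (wg2 * (wg0 * (wg1)))))),
  wg1 * (wg0 * (wg1 * (wg0 * (wg2 * (wg0 * (wg3)))))),
  wg1 * (wg0 * (wg1 * (wg0 * (wg3 * (wg0 * (wg1)))))),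
  wg1 * (wg0 * (wg1 * (wg0 * (wg3 * (wg0 * (wg2)))))),
  wg1 * (wg0 * (wg2 * (wg0 * (wg1 * (wg0 * (wg1)))))),
  wg1 * (wg0 * (wg2 * (wg0 * (wg1 * (wg0 * (wg2)))))),
  wg1 * (wg0 * (wg3 * (wg0 * (wg1 * (wg0 * (wg1)))))),
  wg1 * (wg0 * (wg3 * (wg0 * (wg1 * (wg0 * (wg3)))))),
  wg2 * (wg0 * (wg1 * (wg0 * (wg1 * (wg0 * (wg1)))))),
  wg2 * (wg0 * (wg1 * (wg0 * (wg1 * (wg0 * (wg2)))))),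
  wg2 * (wg0 * (wg1 * (wg0 * (wg1 * (wg0 * (wg3)))))),
  wg3 * (wg0 * (wg1 * (wg0 * (wg1 * (wg0 * (wg1)))))),
  wg3 * (wg0 * (wg1 * (wg0 * (wg1 * (wg0 * (wg2)))))),
  wg3 * (wg0 * (wg1 * (wg0 * (wg1 * (wg0 * (wg3)))))),
  wg0 * (wg1 * (wg0 * (wg1 * (wg0 * (wg1 * (wg0 * (wg1))))))),
  wg0 * (wg1 * (wg0 * (wg1 * (wg0 * (wg1 * (wg0 * (wg2))))))),
  wg0 * (wg1 * (wg0 * (wg1 * (wg0 * (wg1 * (wg0 * (wg3))))))),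
  wg0 * (wg1 * (wg0 * (wg1 * (wg0 * (wg2 * (wg0 * (wg1))))))),
  wg0 * (wg1 * (wg0 * (wg1 * (wg0 * (wg2 * (wg0 * (wg3))))))),
  wg0 * (wg1 * (wg0 * (wg1 * (wg0 * (wg3 * (wg0 * (wg1))))))),
  wg0 * (wg1 * (wg0 * (wg1 * (wg0 * (wg3 * (wg0 * (wg2))))))),
  wg0 * (wg1 * (wg0 * (wg2 * (wg0 * (wg1 * (wg0 * (wg1))))))),
  wg0 * (wg1 * (wg0 * (wg2 * (wg0 * (wg1 * (wg0 * (wg2))))))),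
  wg0 * (wg1 * (wg0 * (wg3 * (wg0 * (wg1 * (wg0 * (wg1))))))),
  wg0 * (wg1 * (wg0 * (wg3 * (wg0 * (wg1 * (wg0 * (wg3))))))),
  wg0 * (wg2 * (wg0 * (wg1 * (wg0 * (wg1 * (wg0 * (wg1))))))),
  wg0 * (wg2 * (wg0 * (wg1 * (wg0 * (wg1 * (wg0 * (wg2))))))),
  wg0 * (wg2 * (wg0 * (wg1 * (wg0 * (wg1 * (wg0 * (wg3))))))),
  wg0 * (wg3 * (wg0 * (wg1 * (wg0 * (wg1 * (wg0 * (wg1))))))),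
  wg0 * (wg3 * (wg0 * (wg1 * (wg0 * (wg1 * (wg0 * (wg2))))))),
  wg0 * (wg3 * (wg0 * (wg1 * (wg0 * (wg1 * (wg0 * (wg3)))))))]

def tbl0 : List Nat := [1, 0, 5, 6, 7, 2, 3, 4, 11, 12, 13, 8, 9, 10, 23, 24, 25, 26, 27, 28, 29, 30, 31, 14, 15, 16, 17, 18, 19, 20, 21, 22, 39, 40, 41, 42, 43, 44, 45, 32, 33, 34, 35, 36, 37, 38, 59, 60, 61, 62, 63, 64, 65, 66, 67, 68, 69, 70, 71, 46, 47, 48, 49, 50, 51, 52, 53, 54, 55, 56, 57, 58, 83, 84, 85, 86, 87, 88, 89, 90, 91, 92, 93, 72, 73, 74, 75, 76, 77, 78, 79, 80, 81, 82, 111, 112, 113, 114, 115, 116, 117, 118, 119, 120, 121, 122, 123, 124, 125, 126, 127, 94, 95, 96, 97, 98, 99, 100, 101, 102, 103, 104, 105, 106, 107, 108, 109, 110]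
def tbl1 : List Nat := [2, 8, 0, 4, 3, 14, 15, 16, 1, 10, 9, 32, 33, 34, 5, 6, 7, 20, 21, 22, 17, 18, 19, 46, 47, 48, 49, 38, 50, 51, 52, 36, 11, 12, 13, 37, 31, 35, 27, 72, 73, 74, 75, 76, 77, 78, 23, 24, 25, 26, 28, 29, 30, 56, 57, 58, 53, 54, 55, 94, 95, 96, 97, 98, 99, 100, 101, 102, 82, 103, 80, 104, 39, 40, 41, 42, 43, 44, 45, 81, 70, 79, 68, 111, 122, 125, 118, 126, 120, 124, 114, 121, 116, 119, 59, 60, 61, 62, 63, 64, 65, 66, 67, 69, 71, 108, 109, 110, 105, 106, 107, 83, 113, 112, 90, 123, 92, 127, 86, 93, 88, 91, 84, 115, 89, 85, 87, 117]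
def tbl2 : List Nat := [3, 9, 4, 0, 2, 17, 18, 19, 10, 1, 8, 35, 27, 36, 20, 21, 22, 5, 6, 7, 14, 15, 16, 53, 54, 55, 28, 12, 26, 52, 51, 34, 37, 38, 31, 11, 13, 32, 33, 79, 80, 68, 43, 42, 78, 77, 56, 57, 58, 50, 49, 30, 29, 23, 24, 25, 46, 47, 48, 105, 106, 107, 104, 103, 67, 66, 65, 64, 41, 98, 73, 97, 81, 70, 82, 76, 75, 45, 44, 39, 40, 72, 74, 112, 123, 117, 119, 116, 91, 90, 89, 88, 126, 118, 108, 109, 110, 71, 69, 102, 101, 100, 99, 63, 62, 59, 60, 61, 94, 95, 96, 113, 83, 111, 124, 122, 87, 85, 93, 86, 121, 120, 115, 84, 114, 127, 92, 125]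
def tbl3 : List Nat := [4, 10, 3, 2, 0, 20, 21, 22, 9, 8, 1, 37, 38, 31, 17, 18, 19, 14, 15, 16, 5, 6, 7, 56, 57, 58, 50, 33, 49, 30, 29, 13, 35, 27, 36, 32, 34, 11, 12, 81, 70, 82, 76, 75, 45, 44, 53, 54, 55, 28, 26, 52, 51, 46, 47, 48, 23, 24, 25, 108, 109, 110, 71, 69, 102, 101, 100, 99, 74, 63, 40, 62, 79, 80, 68, 43, 42, 78, 77, 72, 73, 39, 41, 113, 115, 127, 93, 92, 121, 114, 124, 120, 87, 86, 105, 106, 107, 104, 103, 67, 66, 65, 64, 98, 97, 94, 95, 96, 59, 60, 61, 112, 111, 83, 89, 84, 126, 125, 119, 118, 91, 88, 123, 122, 90, 117, 116, 85]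


set_option maxRecDepth 10000 in
lemma ws_len : ws.length = 128 := rfl

lemma cert0 : ∀ j : Fin 128, wg0 * (ws.getD j 1) = ws.getD (tbl0.getD j 0) 1 := by decide
lemma cert1 : ∀ j : Fin 128, wg1 * (ws.getD j 1) = ws.getD (tbl1.getD j 0) 1 := by decide
lemma cert2 : ∀ j : Fin 128, wg2 * (ws.getD j 1) = ws.getD (tbl2.getD j 0) 1 := by decide
lemma cert3 : ∀ j : Fin 128, wg3 * (ws.getD j 1) = ws.getD (tbl3.getD j 0) 1 := by decide

lemma ws_key' : ∀ j : Fin 128, (ws.getD j 1).1 = 1 → (ws.getD j 1).2 = 1 := by decide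

/-! ### The graph subgroup W and the homomorphism τ -/

def Wgens : Set (P3 × P3) := {wg0, wg1, wg2, wg3}

def W : Subgroup (P3 × P3) := Subgroup.closure Wgens

lemma getD_mem_ws (k : ℕ) : ws.getD k 1 ∈ ws := by
  by_cases h : k < ws.length
  · rw [List.getD_eq_getElem ws 1 h]
    exact List.getElem_mem h
  · rw [List.getD_eq_default ws 1 (by omega)]
    exact List.mem_cons_self

lemma mem_ws_index : ∀ x ∈ ws, ∃ j : Fin 128, ws.getD (j : ℕ) 1 = x := by
  intro x hx
  obtain ⟨i, hi⟩ := List.mem_iff_get.mp hx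
  refine ⟨⟨i, by rw [← ws_len]; exact i.isLt⟩, ?_⟩
  rw [List.getD_eq_getElem ws 1 (by simpa using i.isLt)]
  rw [List.get_eq_getElem] at hi
  exact hi

lemma W_sub_ws : ∀ x ∈ W, x ∈ ws := by
  classical
  have h := closure_subset_finset Wgens ws.toFinset
    (by rw [List.mem_toFinset]; show (1 : P3 × P3) ∈ ws; exact List.mem_cons_self)
    (by
      intro g hg x hx
      rw [List.mem_toFinset] at hx ⊢
      obtain ⟨j, rfl⟩ := mem_ws_index x hx
      rcases hg with rfl | rfl | rfl | rfl
      · rw [cert0 j]; exact getD_mem_ws _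
      · rw [cert1 j]; exact getD_mem_ws _
      · rw [cert2 j]; exact getD_mem_ws _
      · rw [cert3 j]; exact getD_mem_ws _)
  intro x hx
  have := h x hx
  rwa [List.mem_toFinset] at this

lemma W_key : ∀ x ∈ W, x.1 = 1 → x.2 = 1 := by
  intro x hx h1
  obtain ⟨j, hj⟩ := mem_ws_index x (W_sub_ws x hx)
  rw [← hj] at h1 ⊢
  exact ws_key' j h1

/-! ### The homomorphism τ -/

lemma EF_inj : ∀ e ∈ EF, lv3 e = 1 → e = 1 := by
  classical
  intro e he
  simp only [EF, Finset.mem_insert, Finset.mem_singleton] at he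
  rcases he with rfl | rfl | rfl | rfl | rfl | rfl | rfl | rfl
  · intro _; rfl
  · intro h; exact absurd h (by decide)
  · intro h; exact absurd h (by decide)
  · intro h; exact absurd h (by decide)
  · intro h; exact absurd h (by decide)
  · intro h; exact absurd h (by decide)
  · intro h; exact absurd h (by decide)
  · intro h; exact absurd h (by decide)

lemma lv3_eq_Lh : lv3 = ⇑Lh := rfl

lemma lv3_inj_DS {h h' : Grig} (hh : h ∈ DS) (hh' : h' ∈ DS) (he : lv3 h = lv3 h') :
    h = h' := by
  have hm : h⁻¹ * h' ∈ DS := mul_mem (inv_mem hh) hh'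
  have h1 : lv3 (h⁻¹ * h') = 1 := by
    rw [lv3_eq_Lh, map_mul, map_inv, ← lv3_eq_Lh, he, inv_mul_cancel]
  have := EF_inj _ (DS_sub_EF _ hm) h1
  exact inv_mul_eq_one.mp this

def TauPred (g h : Grig) : Prop := h ∈ DS ∧ (lv3 g, lv3 h) ∈ W

lemma exists_tau : ∀ (p : Pm) (hp : p ∈ Grig), ∃ h : Grig, TauPred ⟨p, hp⟩ h := by
  intro p hp
  induction hp using Subgroup.closure_induction with
  | mem x hx =>
      simp only [Set.mem_insert_iff, Set.mem_singleton_iff] at hx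
      rcases hx with rfl | rfl | rfl | rfl
      · exact ⟨gd, Subgroup.subset_closure (by simp),
          Subgroup.subset_closure (show wg0 ∈ Wgens by simp [Wgens])⟩
      · exact ⟨1, one_mem _,
          Subgroup.subset_closure (show wg1 ∈ Wgens by simp [Wgens])⟩
      · exact ⟨ga, Subgroup.subset_closure (by simp),
          Subgroup.subset_closure (show wg2 ∈ Wgens by simp [Wgens])⟩
      · exact ⟨ga, Subgroup.subset_closure (by simp),
          Subgroup.subset_closure (show wg3 ∈ Wgens by simp [Wgens])⟩
  | one => exact ⟨1, one_mem _, one_mem W⟩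
  | mul x y hx hy ihx ihy =>
      obtain ⟨h1, hd1, hw1⟩ := ihx
      obtain ⟨h2, hd2, hw2⟩ := ihy
      refine ⟨h1 * h2, mul_mem hd1 hd2, ?_⟩
      show (lv3 ((⟨x, hx⟩ : Grig) * ⟨y, hy⟩), lv3 (h1 * h2)) ∈ W
      rw [lv3_mul, lv3_mul]
      exact mul_mem hw1 hw2
  | inv x hx ih =>
      obtain ⟨h1, hd1, hw1⟩ := ih
      refine ⟨h1⁻¹, inv_mem hd1, ?_⟩
      show (lv3 ((⟨x, hx⟩ : Grig)⁻¹), lv3 h1⁻¹) ∈ W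
      rw [lv3_eq_Lh, map_inv, map_inv]
      exact inv_mem hw1

noncomputable def tauf (g : Grig) : Grig := (exists_tau g.1 g.2).choose

lemma tauf_spec (g : Grig) : TauPred g (tauf g) := (exists_tau g.1 g.2).choose_spec

lemma tauf_eq {g h : Grig} (hp : TauPred g h) : tauf g = h := by
  obtain ⟨hd, hw⟩ := tauf_spec g
  have hprod : ((lv3 g, lv3 (tauf g))⁻¹ * (lv3 g, lv3 h)) ∈ W :=
    mul_mem (inv_mem hw) hp.2
  have h1 : ((lv3 g, lv3 (tauf g))⁻¹ * (lv3 g, lv3 h)).1 = 1 := by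
    show (lv3 g)⁻¹ * lv3 g = 1
    rw [inv_mul_cancel]
  have h2 := W_key _ hprod h1
  have h3 : (lv3 (tauf g))⁻¹ * lv3 h = 1 := h2
  exact lv3_inj_DS hd hp.1 (inv_mul_eq_one.mp h3)

noncomputable def τh : Grig →* Grig :=
  MonoidHom.mk' tauf (fun g h => by
    refine tauf_eq ⟨mul_mem (tauf_spec g).1 (tauf_spec h).1, ?_⟩
    have key : (lv3 (g * h), lv3 (tauf g * tauf h)) =
        (lv3 g, lv3 (tauf g)) * (lv3 h, lv3 (tauf h)) := by
      rw [lv3_mul, lv3_mul]; rfl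
    rw [key]
    exact mul_mem (tauf_spec g).2 (tauf_spec h).2)

lemma τh_ga : τh ga = gd :=
  tauf_eq ⟨Subgroup.subset_closure (by simp),
    Subgroup.subset_closure (show wg0 ∈ Wgens by simp [Wgens])⟩

lemma τh_gb : τh gb = 1 :=
  tauf_eq ⟨one_mem _, Subgroup.subset_closure (show wg1 ∈ Wgens by simp [Wgens])⟩

lemma τh_gc : τh gc = ga :=
  tauf_eq ⟨Subgroup.subset_closure (by simp),
    Subgroup.subset_closure (show wg2 ∈ Wgens by simp [Wgens])⟩

lemma τh_gd : τh gd = ga :=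
  tauf_eq ⟨Subgroup.subset_closure (by simp),
    Subgroup.subset_closure (show wg3 ∈ Wgens by simp [Wgens])⟩

/-! ### The pairing construction and the homomorphism σ -/

def pairF (p q : Pm) : List Bool → List Bool := fun l =>
  match l with
  | [] => []
  | false :: σ => false :: p σ
  | true :: σ => true :: q σ

def pairE (p q : Pm) : Pm where
  toFun := pairF p q
  invFun := pairF p⁻¹ q⁻¹
  left_inv := by
    intro l
    rcases l with _ | ⟨x, σ⟩
    · rfl
    · cases x <;> simp [pairF]
  right_inv := by
    intro l
    rcases l with _ | ⟨x, σ⟩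
    · rfl
    · cases x <;> simp [pairF]

lemma pairE_nil (p q : Pm) : pairE p q [] = [] := rfl
lemma pairE_false (p q : Pm) (σ : List Bool) : pairE p q (false :: σ) = false :: p σ := rfl
lemma pairE_true (p q : Pm) (σ : List Bool) : pairE p q (true :: σ) = true :: q σ := rfl

lemma pairE_mul (p q p' q' : Pm) : pairE (p * p') (q * q') = pairE p q * pairE p' q' := by
  apply Equiv.ext
  intro l
  rcases l with _ | ⟨x, σ⟩
  · rfl
  · cases x <;> simp [Equiv.Perm.mul_apply, pairE_false, pairE_true]

lemma pairE_da : pairE dP aP = aP * cP * aP := by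
  apply Equiv.ext
  intro l
  rcases l with _ | ⟨x, σ⟩
  · simp [pairE_nil, Equiv.Perm.mul_apply, aP_apply, cP_apply, grigA, grigC]
  · cases x <;>
      simp [pairE_false, pairE_true, Equiv.Perm.mul_apply, aP_apply, cP_apply, dP_apply,
        grigA, grigC]

lemma pairE_1b : pairE 1 bP = dP := by
  apply Equiv.ext
  intro l
  rcases l with _ | ⟨x, σ⟩
  · simp [pairE_nil, dP_apply, grigD]
  · cases x <;> simp [pairE_false, pairE_true, bP_apply, dP_apply, grigD]

lemma pairE_ac : pairE aP cP = bP := by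
  apply Equiv.ext
  intro l
  rcases l with _ | ⟨x, σ⟩
  · simp [pairE_nil, bP_apply, grigB]
  · cases x <;> simp [pairE_false, pairE_true, aP_apply, bP_apply, cP_apply, grigB]

lemma pairE_ad : pairE aP dP = cP := by
  apply Equiv.ext
  intro l
  rcases l with _ | ⟨x, σ⟩
  · simp [pairE_nil, cP_apply, grigC]
  · cases x <;> simp [pairE_false, pairE_true, aP_apply, cP_apply, dP_apply, grigC]

lemma pairE_mem : ∀ g : Grig, pairE ((τh g : Grig) : Pm) ((g : Grig) : Pm) ∈ Grig := by
  have main : ∀ (p : Pm) (hp : p ∈ Grig),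
      pairE ((τh ⟨p, hp⟩ : Grig) : Pm) p ∈ Grig := by
    intro p hp
    induction hp using Subgroup.closure_induction with
    | mem x hx =>
        simp only [Set.mem_insert_iff, Set.mem_singleton_iff] at hx
        rcases hx with rfl | rfl | rfl | rfl
        · rw [show (⟨aP, by exact Subgroup.subset_closure (by simp)⟩ : Grig) = ga from rfl,
            τh_ga]
          rw [show ((gd : Grig) : Pm) = dP from rfl, pairE_da]
          exact mul_mem (mul_mem ga.2 gc.2) ga.2
        · rw [show (⟨bP, by exact Subgroup.subset_closure (by simp)⟩ : Grig) = gb from rfl,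
            τh_gb]
          rw [show (((1 : Grig) : Grig) : Pm) = 1 from rfl, pairE_1b]
          exact gd.2
        · rw [show (⟨cP, by exact Subgroup.subset_closure (by simp)⟩ : Grig) = gc from rfl,
            τh_gc]
          rw [show ((ga : Grig) : Pm) = aP from rfl, pairE_ac]
          exact gb.2
        · rw [show (⟨dP, by exact Subgroup.subset_closure (by simp)⟩ : Grig) = gd from rfl,
            τh_gd]
          rw [show ((ga : Grig) : Pm) = aP from rfl, pairE_ad]
          exact gc.2
    | one =>
        rw [show (⟨(1 : Pm), by exact one_mem Grig⟩ : Grig) = 1 from rfl, map_one]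
        rw [show (((1 : Grig) : Grig) : Pm) = 1 from rfl]
        rw [show pairE (1 : Pm) (1 : Pm) = 1 from by
          apply Equiv.ext; intro l; rcases l with _ | ⟨x, σ⟩
          · rfl
          · cases x <;> rfl]
        exact one_mem Grig
    | mul x y hx hy ihx ihy =>
        have e1 : (⟨x * y, mul_mem hx hy⟩ : Grig) = (⟨x, hx⟩ : Grig) * ⟨y, hy⟩ := rfl
        rw [show pairE ((τh ⟨x * y, mul_mem hx hy⟩ : Grig) : Pm) (x * y) =
            pairE ((τh ⟨x, hx⟩ : Grig) : Pm) x * pairE ((τh ⟨y, hy⟩ : Grig) : Pm) y from by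
          rw [← pairE_mul]
          congr 1
          rw [e1, map_mul]
          rfl]
        exact mul_mem ihx ihy
    | inv x hx ih =>
        have e1 : (⟨x⁻¹, inv_mem hx⟩ : Grig) = (⟨x, hx⟩ : Grig)⁻¹ := rfl
        rw [show pairE ((τh ⟨x⁻¹, inv_mem hx⟩ : Grig) : Pm) x⁻¹ =
            (pairE ((τh ⟨x, hx⟩ : Grig) : Pm) x)⁻¹ from by
          rw [show (pairE ((τh ⟨x, hx⟩ : Grig) : Pm) x)⁻¹ =
              pairE (((τh ⟨x, hx⟩ : Grig) : Pm))⁻¹ x⁻¹ from rfl]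
          congr 1
          rw [e1, map_inv]
          rfl]
        exact inv_mem ih
  intro g
  exact main g.1 g.2

noncomputable def σf (g : Grig) : Grig :=
  ⟨pairE ((τh g : Grig) : Pm) ((g : Grig) : Pm), pairE_mem g⟩

noncomputable def σh : Grig →* Grig :=
  MonoidHom.mk' σf (fun g h => by
    apply Subtype.ext
    show pairE ((τh (g * h) : Grig) : Pm) ((g * h : Grig) : Pm) = _
    rw [map_mul]
    rw [show ((τh g * τh h : Grig) : Pm) = ((τh g : Grig) : Pm) * ((τh h : Grig) : Pm) from rfl]
    rw [show ((g * h : Grig) : Pm) = ((g : Grig) : Pm) * ((h : Grig) : Pm) from rfl]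
    rw [pairE_mul]
    rfl)

lemma σh_mem_Hst (g : Grig) : σh g ∈ Hst := by
  rw [mem_Hst]
  intro x σ
  cases x
  · exact ⟨((τh g : Grig) : Pm) σ, rfl⟩
  · exact ⟨((g : Grig) : Pm) σ, rfl⟩

lemma σh_ga : σh ga = ga * gc * ga := by
  apply Subtype.ext
  show pairE ((τh ga : Grig) : Pm) aP = aP * cP * aP
  rw [τh_ga]
  exact pairE_da

lemma σh_gb : σh gb = gd := by
  apply Subtype.ext
  show pairE ((τh gb : Grig) : Pm) bP = dP
  rw [τh_gb]
  exact pairE_1b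

lemma σh_gc : σh gc = gb := by
  apply Subtype.ext
  show pairE ((τh gc : Grig) : Pm) cP = bP
  rw [τh_gc]
  exact pairE_ac

lemma σh_gd : σh gd = gc := by
  apply Subtype.ext
  show pairE ((τh gd : Grig) : Pm) dP = cP
  rw [τh_gd]
  exact pairE_ad

lemma ψG_σh (g : Grig) : ψG ⟨σh g, σh_mem_Hst g⟩ = (τh g, g) := by
  refine Prod.ext (Subtype.ext ?_) (Subtype.ext ?_)
  · show (EH (sfOf ⟨σh g, σh_mem_Hst g⟩)).1 = ((τh g : Grig) : Pm)
    apply Equiv.ext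
    intro σ
    rfl
  · show (EH (sfOf ⟨σh g, σh_mem_Hst g⟩)).2 = ((g : Grig) : Pm)
    apply Equiv.ext
    intro σ
    rfl

/-- The maps `σ` (with `σ(a) = aca`, `σ(b) = d`, `σ(c) = b`, `σ(d) = c`) and `τ` (with
`τ(a) = d`, `τ(b) = 1`, `τ(c) = a`, `τ(d) = a`) extend to homomorphisms `G → G` of the
Grigorchuk group; the image of `σ` lies in the first-level stabilizer `H`, and
`ψ(σ(g)) = (τ(g), g)` for all `g ∈ G`. -/
theorem grigorchuk_sigma_tau :
    ∃ H : Subgroup Grig,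
      (∀ g : Grig, g ∈ H ↔ FixesFirst (g : Equiv.Perm (List Bool))) ∧
      ∃ ψ : H →* Grig × Grig, PsiProp H ψ ∧
      ∃ σ τ : Grig →* Grig,
        σ ga = ga * gc * ga ∧ σ gb = gd ∧ σ gc = gb ∧ σ gd = gc ∧
        τ ga = gd ∧ τ gb = 1 ∧ τ gc = ga ∧ τ gd = ga ∧
        ∃ hσ : ∀ g : Grig, σ g ∈ H,
          ∀ g : Grig, ψ ⟨σ g, hσ g⟩ = (τ g, g) := by
  refine ⟨Hst, fun g => mem_Hst, ψG, psiProp_ψG, σh, τh, σh_ga, σh_gb, σh_gc, σh_gd,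
    τh_ga, τh_gb, τh_gc, τh_gd, σh_mem_Hst, fun g => ψG_σh g⟩
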